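/- arXiv:1101.3481 — 5 statements merged into one kernel-verified Lean document; each statement's English description precedes it below -/
import Mathlib

section
/- For any integer n ≥ 2, the sum over l = 1 to n-1 of 1/(2 - ζ^l - ζ^{-l}), where ζ = exp(2πi/n) is a primitive n-th root of unity, equals (n² − 1)/12. -/
open Complex

private lemma aux1 (z : ℂ) (n : ℕ) :
    (1-z)^2 * ∑ k ∈ Finset.range n, (k:ℂ) * z^k
      = z - n*z^n + n*z^(n+1) - z^(n+1) := by
  induction n with
  | zero => simp
  | succ m ih =>
    rw [Finset.sum_range_succ]
    push_cast
    linear_combination ih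

private lemma aux2 (z : ℂ) (n : ℕ) :
    (1-z)^2 * ∑ k ∈ Finset.range n, (k:ℂ)*((n:ℂ)-(k:ℂ)) * z^k
      = ((n:ℂ)+1)*z + 2 - 2*∑ k ∈ Finset.range (n+1), z^k + ((n:ℂ)-1)*z^(n+1) := by
  induction n with
  | zero => simp
  | succ m ih =>
    push_cast
    have h1 : ∀ k:ℕ, (k:ℂ)*((m:ℂ)+1-(k:ℂ)) * z^k
        = (k:ℂ)*((m:ℂ)-(k:ℂ)) * z^k + (k:ℂ)*z^k := fun k => by ring
    rw [Finset.sum_congr rfl (fun k _ => h1 k), Finset.sum_add_distrib,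
      Finset.sum_range_succ (f := fun k => (k:ℂ)*((m:ℂ)-(k:ℂ)) * z^k),
      Finset.sum_range_succ (f := fun k => z^k) (n := m+1)]
    have ha := aux1 z (m+1)
    push_cast at ha
    linear_combination ih + ha
  
private lemma sumk (n : ℕ) : ∑ k ∈ Finset.range n, (k:ℂ) = n*(n-1)/2 := by
  induction n with
  | zero => simp
  | succ m ih => rw [Finset.sum_range_succ, ih]; push_cast; ring

private lemma sumk2 (n : ℕ) : ∑ k ∈ Finset.range n, (k:ℂ)^2 = n*(n-1)*(2*n-1)/6 := by
  induction n with
  | zero => simp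
  | succ m ih => rw [Finset.sum_range_succ, ih]; push_cast; ring

private lemma sumc (n : ℕ) :
    ∑ k ∈ Finset.range n, (k:ℂ)*((n:ℂ)-(k:ℂ)) = n*((n:ℂ)^2-1)/6 := by
  have h : ∀ k ∈ Finset.range n, (k:ℂ)*((n:ℂ)-(k:ℂ)) = (n:ℂ)*(k:ℂ) - (k:ℂ)^2 := by
    intro k _; ring
  rw [Finset.sum_congr rfl h, Finset.sum_sub_distrib, ← Finset.mul_sum, sumk, sumk2]
  ring

theorem stmt0 (n : ℕ) (hn : 2 ≤ n) :
    ∑ l ∈ Finset.Icc 1 (n - 1),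
      1 / (2 - Complex.exp (2 * Real.pi * Complex.I / n) ^ (l : ℤ)
            - Complex.exp (2 * Real.pi * Complex.I / n) ^ (-(l : ℤ))) =
      ((n : ℂ) ^ 2 - 1) / 12 := by
  have hn0 : (n : ℂ) ≠ 0 := Nat.cast_ne_zero.mpr (by omega)
  set ζ : ℂ := Complex.exp (2 * Real.pi * Complex.I / n) with hζ
  have hprim : IsPrimitiveRoot ζ n := Complex.isPrimitiveRoot_exp n (by omega)
  have hζn : ζ ^ n = 1 := hprim.pow_eq_one
  have hζ0 : ζ ≠ 0 := Complex.exp_ne_zero _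
  have hIcc : Finset.Icc 1 (n-1) = Finset.Ico 1 n := by
    ext x; simp only [Finset.mem_Icc, Finset.mem_Ico]; omega
  rw [hIcc]
  have h2n : (2*(n:ℂ)) ≠ 0 := by simp [hn0]
  have hterm : ∀ l ∈ Finset.Ico 1 n,
      1 / (2 - ζ ^ (l : ℤ) - ζ ^ (-(l : ℤ)))
        = -(∑ k ∈ Finset.range n, (k:ℂ)*((n:ℂ)-(k:ℂ)) * (ζ^k)^l)/(2*(n:ℂ)) := by
    intro l hl
    rw [Finset.mem_Ico] at hl
    set z : ℂ := ζ ^ l with hzdef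
    have hz0 : z ≠ 0 := pow_ne_zero _ hζ0
    have hz1 : z ≠ 1 := hprim.pow_ne_one_of_pos_of_lt (by omega) hl.2
    have hzn : z ^ n = 1 := by
      rw [hzdef, ← pow_mul, mul_comm, pow_mul, hζn, one_pow]
    have hone : (1:ℂ) - z ≠ 0 := sub_ne_zero.mpr (Ne.symm hz1)
    have hg : ∑ k ∈ Finset.range n, z^k = 0 := by
      rw [geom_sum_eq hz1, hzn]; simp
    have hT : (1-z)^2 * ∑ k ∈ Finset.range n, (k:ℂ)*((n:ℂ)-(k:ℂ)) * z^k = 2*(n:ℂ)*z := by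
      rw [aux2, Finset.sum_range_succ, hg, hzn, pow_succ, hzn]
      ring
    have hpow : ∀ k : ℕ, (ζ^k)^l = z^k := by
      intro k; rw [hzdef]; exact pow_right_comm ζ k l
    simp only [hpow]
    have hzl : ζ ^ (l : ℤ) = z := by rw [hzdef]; exact zpow_natCast ζ l
    have hzl' : ζ ^ (-(l : ℤ)) = z⁻¹ := by rw [hzdef, zpow_neg, zpow_natCast]
    rw [hzl, hzl']
    have hA : ((2:ℂ) - z - z⁻¹) * z = -(1-z)^2 := by
      field_simp; ring
    have hAne : (2:ℂ) - z - z⁻¹ ≠ 0 := by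
      intro h
      rw [h, zero_mul] at hA
      exact pow_ne_zero 2 hone (neg_eq_zero.mp hA.symm)
    rw [div_eq_div_iff hAne h2n]
    have key : ((2:ℂ) - z - z⁻¹) * (-(∑ k ∈ Finset.range n, (k:ℂ)*((n:ℂ)-(k:ℂ)) * z^k)) * z
        = (2*(n:ℂ)) * z := by
      calc ((2:ℂ) - z - z⁻¹) * (-(∑ k ∈ Finset.range n, (k:ℂ)*((n:ℂ)-(k:ℂ)) * z^k)) * z
          = (((2:ℂ) - z - z⁻¹) * z) * (-(∑ k ∈ Finset.range n, (k:ℂ)*((n:ℂ)-(k:ℂ)) * z^k)) := by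
            ring
        _ = (2*(n:ℂ)) * z := by rw [hA]; linear_combination hT
    have hc := mul_right_cancel₀ hz0 key
    linear_combination -hc
  rw [Finset.sum_congr rfl hterm]
  have hswap : ∑ l ∈ Finset.Ico 1 n,
        (-(∑ k ∈ Finset.range n, (k:ℂ)*((n:ℂ)-(k:ℂ)) * (ζ^k)^l)/(2*(n:ℂ)))
      = ∑ k ∈ Finset.range n,
        (-((k:ℂ)*((n:ℂ)-(k:ℂ)) * ∑ l ∈ Finset.Ico 1 n, (ζ^k)^l)/(2*(n:ℂ))) := by
    simp only [neg_div, Finset.sum_div, Finset.mul_sum, ← Finset.sum_neg_distrib]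
    exact Finset.sum_comm
  rw [hswap]
  have hinner : ∀ k ∈ Finset.range n,
      (-((k:ℂ)*((n:ℂ)-(k:ℂ)) * ∑ l ∈ Finset.Ico 1 n, (ζ^k)^l)/(2*(n:ℂ)))
        = (k:ℂ)*((n:ℂ)-(k:ℂ))/(2*(n:ℂ)) := by
    intro k hk
    rw [Finset.mem_range] at hk
    rcases Nat.eq_zero_or_pos k with hk0 | hk0
    · subst hk0; simp
    · have hw1 : ζ^k ≠ 1 := hprim.pow_ne_one_of_pos_of_lt hk0.ne' hk
      have hwn : (ζ^k)^n = 1 := by rw [← pow_mul, mul_comm, pow_mul, hζn, one_pow]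
      have hg : ∑ l ∈ Finset.range n, (ζ^k)^l = 0 := by
        rw [geom_sum_eq hw1, hwn]; simp
      have hins : Finset.range n = insert 0 (Finset.Ico 1 n) := by
        ext x; simp only [Finset.mem_range, Finset.mem_insert, Finset.mem_Ico]; omega
      have h0 : (0:ℕ) ∉ Finset.Ico 1 n := by simp
      rw [hins, Finset.sum_insert h0, pow_zero] at hg
      have hIsum : ∑ l ∈ Finset.Ico 1 n, (ζ^k)^l = -1 := by linear_combination hg
      rw [hIsum]; ring
  rw [Finset.sum_congr rfl hinner, ← Finset.sum_div, sumc]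
  field_simp
  ring
end

section
/- For any integer n ≥ 2, the sum over k = 1 to n-1 of 1/(2 - exp(πik/n) - exp(-πik/n)) equals (n² − 1)/6. -/
open Complex Finset

namespace Aux1

noncomputable def A (m : ℕ) (z : ℂ) : ℂ := ∑ j ∈ range m, (j : ℂ) * z ^ j

lemma A_one_sub (z : ℂ) (m : ℕ) :
    (1 - z) * A m z = (∑ j ∈ range m, z ^ j) - 1 - ((m : ℂ) - 1) * z ^ m := by
  induction m with
  | zero => simp [A]
  | succ M ih =>
    rw [A, sum_range_succ, ← A, mul_add, ih, sum_range_succ]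
    push_cast
    ring

lemma A_spec {m : ℕ} {z : ℂ} (h1 : z ^ m = 1) (hz : z ≠ 1) :
    A m z * (1 - z) = -m := by
  have hg : ∑ j ∈ range m, z ^ j = 0 := by
    rw [geom_sum_eq hz, h1, sub_self, zero_div]
  rw [mul_comm, A_one_sub, hg, h1]
  ring

lemma A_one (m : ℕ) : A m 1 = m * (m - 1) / 2 := by
  induction m with
  | zero => simp [A]
  | succ M ih =>
    rw [A, sum_range_succ, ← A, ih]
    push_cast
    ring

lemma sum_sq (m : ℕ) : ∑ j ∈ range m, (j : ℂ) ^ 2 = m * (m - 1) * (2 * m - 1) / 6 := by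
  induction m with
  | zero => simp
  | succ M ih =>
    rw [sum_range_succ, ih]
    push_cast
    ring

end Aux1

open Aux1 in
theorem stmt1 (n : ℕ) (hn : 2 ≤ n) :
    ∑ k ∈ Finset.Icc 1 (n - 1),
      1 / (2 - Complex.exp (Real.pi * Complex.I * k / n)
            - Complex.exp (-(Real.pi * Complex.I * k / n))) =
      ((n : ℂ) ^ 2 - 1) / 6 := by
  have hn0 : (n : ℂ) ≠ 0 := Nat.cast_ne_zero.2 (by omega)
  obtain ⟨m, hmdef⟩ : ∃ m : ℕ, m = 2 * n := ⟨_, rfl⟩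
  have hm0 : (m : ℂ) ≠ 0 := Nat.cast_ne_zero.2 (by omega)
  set ω : ℂ := Complex.exp (Real.pi * I / n) with hωdef
  have hωpow : ∀ k : ℕ, ω ^ k = Complex.exp (Real.pi * I * k / n) := by
    intro k
    rw [hωdef, ← Complex.exp_nat_mul]
    congr 1
    field_simp
  have hprim : IsPrimitiveRoot ω m := by
    have h := Complex.isPrimitiveRoot_exp m (by omega)
    have : Complex.exp (2 * Real.pi * I / m) = ω := by
      rw [hωdef]
      congr 1
      rw [hmdef]
      push_cast
      field_simp
    rwa [this] at h
  have hωm : ω ^ m = 1 := hprim.pow_eq_one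
  have hω0 : ω ≠ 0 := Complex.exp_ne_zero _
  -- orthogonality
  have horth : ∀ j ∈ range m, ∀ l ∈ range m,
      ∑ k ∈ range m, (ω ^ j * (ω ^ l)⁻¹) ^ k = if j = l then (m : ℂ) else 0 := by
    intro j hj l hl
    rcases eq_or_ne j l with rfl | hne
    · rw [mul_inv_cancel₀ (pow_ne_zero _ hω0)]
      simp
    · have hζ : ω ^ j * (ω ^ l)⁻¹ ≠ 1 := by
        intro h
        apply hne
        apply hprim.pow_inj (mem_range.1 hj) (mem_range.1 hl)
        rw [mul_inv_eq_one₀ (pow_ne_zero _ hω0)] at h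
        exact h
      have hζm : (ω ^ j * (ω ^ l)⁻¹) ^ m = 1 := by
        rw [mul_pow, ← pow_mul, mul_comm j m, pow_mul, hωm, one_pow, one_mul, inv_pow,
          ← pow_mul, mul_comm l m, pow_mul, hωm, one_pow, inv_one]
      rw [geom_sum_eq hζ, hζm, sub_self, zero_div, if_neg hne]
  -- the double sum expansion of A * A
  have hFk : ∀ k : ℕ, A m (ω ^ k) * A m ((ω ^ k)⁻¹)
      = ∑ j ∈ range m, ∑ l ∈ range m, ((j : ℂ) * l) * (ω ^ j * (ω ^ l)⁻¹) ^ k := by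
    intro k
    rw [A, A, sum_mul_sum]
    refine sum_congr rfl fun j _ => sum_congr rfl fun l _ => ?_
    have e1 : (ω ^ k) ^ j = (ω ^ j) ^ k := by
      rw [← pow_mul, ← pow_mul, mul_comm]
    have e2 : ((ω ^ k)⁻¹) ^ l = ((ω ^ l)⁻¹) ^ k := by
      rw [← inv_pow, ← inv_pow, ← pow_mul, ← pow_mul, mul_comm]
    rw [e1, e2, mul_pow]
    ring
  have hFsum : ∑ k ∈ range m, A m (ω ^ k) * A m ((ω ^ k)⁻¹)
      = m * ∑ j ∈ range m, (j : ℂ) ^ 2 := by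
    calc ∑ k ∈ range m, A m (ω ^ k) * A m ((ω ^ k)⁻¹)
        = ∑ k ∈ range m, ∑ j ∈ range m, ∑ l ∈ range m,
            ((j : ℂ) * l) * (ω ^ j * (ω ^ l)⁻¹) ^ k :=
          sum_congr rfl fun k _ => hFk k
      _ = ∑ j ∈ range m, ∑ l ∈ range m, ∑ k ∈ range m,
            ((j : ℂ) * l) * (ω ^ j * (ω ^ l)⁻¹) ^ k := by
          rw [sum_comm]
          exact sum_congr rfl fun j _ => sum_comm
      _ = ∑ j ∈ range m, ∑ l ∈ range m,
            ((j : ℂ) * l) * ∑ k ∈ range m, (ω ^ j * (ω ^ l)⁻¹) ^ k := by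
          simp [mul_sum]
      _ = ∑ j ∈ range m, ∑ l ∈ range m,
            ((j : ℂ) * l) * (if j = l then (m : ℂ) else 0) :=
          sum_congr rfl fun j hj => sum_congr rfl fun l hl => by rw [horth j hj l hl]
      _ = ∑ j ∈ range m, (j : ℂ) ^ 2 * m := by
          refine sum_congr rfl fun j hj => ?_
          simp only [mul_ite, mul_zero]
          rw [Finset.sum_ite_eq (range m) j (fun l => (j : ℂ) * l * m), if_pos hj]
          ring
      _ = m * ∑ j ∈ range m, (j : ℂ) ^ 2 := by
          rw [← sum_mul, mul_comm]
  -- per-term formula on Icc 1 (m-1)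
  have hterm : ∀ k ∈ Icc 1 (m - 1),
      1 / (2 - ω ^ k - (ω ^ k)⁻¹) = A m (ω ^ k) * A m ((ω ^ k)⁻¹) / (m : ℂ) ^ 2 := by
    intro k hk
    rw [mem_Icc] at hk
    set ζ : ℂ := ω ^ k with hζdef
    have hζ0 : ζ ≠ 0 := pow_ne_zero _ hω0
    have hζ1 : ζ ≠ 1 := hprim.pow_ne_one_of_pos_of_lt (by omega) (by omega)
    have hζm : ζ ^ m = 1 := by
      rw [hζdef, ← pow_mul, mul_comm k m, pow_mul, hωm, one_pow]
    have hζim : (ζ⁻¹) ^ m = 1 := by rw [inv_pow, hζm, inv_one]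
    have hζi1 : ζ⁻¹ ≠ 1 := by
      rw [ne_eq, inv_eq_one]
      exact hζ1
    have hA1 := A_spec hζm hζ1
    have hA2 := A_spec hζim hζi1
    have hD : (2 - ζ - ζ⁻¹) * (A m ζ * A m ζ⁻¹) = (m : ℂ) ^ 2 := by
      have e1 : 2 - ζ - ζ⁻¹ = (1 - ζ) * (1 - ζ⁻¹) := by
        field_simp
        ring
      rw [e1, show (1 - ζ) * (1 - ζ⁻¹) * (A m ζ * A m ζ⁻¹)
          = (A m ζ * (1 - ζ)) * (A m ζ⁻¹ * (1 - ζ⁻¹)) from by ring, hA1, hA2]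
      ring
    have hDne : (2 - ζ - ζ⁻¹) ≠ 0 := by
      intro h
      rw [h, zero_mul] at hD
      exact (pow_ne_zero 2 hm0) hD.symm
    rw [div_eq_div_iff hDne (pow_ne_zero 2 hm0)]
    linear_combination -hD
  -- range split
  have hIcc : Icc 1 (m - 1) = Ico 1 m := by
    rw [← Finset.Ico_add_one_right_eq_Icc]
    congr 1
    omega
  have hsplit : ∀ F : ℕ → ℂ, ∑ k ∈ range m, F k = F 0 + ∑ k ∈ Icc 1 (m - 1), F k := by
    intro F
    rw [hIcc, range_eq_Ico, ← Finset.sum_Ico_consecutive F (Nat.zero_le 1) (by omega : 1 ≤ m)]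
    congr 1
    simp
  -- total sum T over Icc 1 (m-1)
  have hT : ∑ k ∈ Icc 1 (m - 1), 1 / (2 - ω ^ k - (ω ^ k)⁻¹)
      = ((m : ℂ) ^ 2 - 1) / 12 := by
    rw [sum_congr rfl hterm, ← sum_div]
    have h0 : A m (ω ^ 0) * A m ((ω ^ 0)⁻¹) = ((m : ℂ) * (m - 1) / 2) ^ 2 := by
      rw [pow_zero, inv_one, A_one]
      ring
    have := hsplit (fun k => A m (ω ^ k) * A m ((ω ^ k)⁻¹))
    rw [hFsum, h0] at this
    have hsum2 : ∑ k ∈ Icc 1 (m - 1), A m (ω ^ k) * A m ((ω ^ k)⁻¹)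
        = (m : ℂ) * ((m : ℂ) * (m - 1) * (2 * m - 1) / 6) - ((m : ℂ) * (m - 1) / 2) ^ 2 := by
      rw [← sum_sq m]
      linear_combination -this
    rw [hsum2]
    field_simp
    ring
  -- symmetry and assembly
  have hωinv : ∀ k ≤ m, ω ^ (m - k) = (ω ^ k)⁻¹ := by
    intro k hk
    have h1 : ω ^ (m - k) * ω ^ k = 1 := by
      rw [← pow_add, Nat.sub_add_cancel hk, hωm]
    exact eq_inv_of_mul_eq_one_left h1
  have hrefl : ∑ k ∈ Ico (n + 1) m, 1 / (2 - ω ^ k - (ω ^ k)⁻¹)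
      = ∑ k ∈ Ico 1 n, 1 / (2 - ω ^ k - (ω ^ k)⁻¹) := by
    refine Finset.sum_nbij' (fun k => m - k) (fun k => m - k) ?_ ?_ ?_ ?_ ?_
    · intro a ha
      simp only [mem_Ico] at ha ⊢
      omega
    · intro a ha
      simp only [mem_Ico] at ha ⊢
      omega
    · intro a ha
      simp only [mem_Ico] at ha
      omega
    · intro a ha
      simp only [mem_Ico] at ha
      omega
    · intro a ha
      simp only [mem_Ico] at ha
      rw [hωinv a (by omega), inv_inv]
      ring_nf
  have hsplit2 : ∑ k ∈ Icc 1 (m - 1), 1 / (2 - ω ^ k - (ω ^ k)⁻¹)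
      = (∑ k ∈ Ico 1 n, 1 / (2 - ω ^ k - (ω ^ k)⁻¹))
        + (1 / (2 - ω ^ n - (ω ^ n)⁻¹)
          + ∑ k ∈ Ico (n + 1) m, 1 / (2 - ω ^ k - (ω ^ k)⁻¹)) := by
    rw [hIcc, ← Finset.sum_Ico_consecutive _ (by omega : 1 ≤ n) (by omega : n ≤ m),
      Finset.sum_eq_sum_Ico_succ_bot (by omega : n < m)]
  have hgn : 1 / (2 - ω ^ n - (ω ^ n)⁻¹) = 1 / 4 := by
    have hωn : ω ^ n = -1 := by
      rw [hωpow, show (Real.pi : ℂ) * I * n / n = Real.pi * I from by field_simp,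
        Complex.exp_pi_mul_I]
    rw [hωn]
    norm_num
  have hgoal : ∀ k ∈ Icc 1 (n - 1),
      1 / (2 - Complex.exp (Real.pi * I * k / n) - Complex.exp (-(Real.pi * I * k / n)))
        = 1 / (2 - ω ^ k - (ω ^ k)⁻¹) := by
    intro k _
    rw [← hωpow, Complex.exp_neg, ← hωpow]
  have hIco1 : Icc 1 (n - 1) = Ico 1 n := by
    rw [← Finset.Ico_add_one_right_eq_Icc]
    congr 1
    omega
  rw [sum_congr rfl hgoal, hIco1]
  rw [hsplit2, hrefl, hgn] at hT
  have hm2 : (m : ℂ) = 2 * n := by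
    rw [hmdef]
    push_cast
    ring
  rw [hm2] at hT
  linear_combination hT / 2
end

section
/- For any integer n ≥ 2, the sum over k = 1 to n-1 of 1/(4 sin²(πk/(2n))) equals (n²−1)/6. -/
open Finset Complex Real

-- polynomial identity
private lemma keypoly (x : ℂ) (m : ℕ) :
    (x - 1)^2 * ∑ j ∈ range m, (j:ℂ) * x ^ j
      = ((m:ℂ) - 1) * x^(m+1) - (m:ℂ) * x^m + x := by
  induction m with
  | zero => simp
  | succ m ih =>
    rw [Finset.sum_range_succ, mul_add, ih]
    push_cast
    ring

private lemma sumA (x : ℂ) (m : ℕ) (hm : x ^ m = 1) (hx : x ≠ 1) :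
    ∑ j ∈ range m, (j:ℂ) * x ^ j = m / (x - 1) := by
  have h1 : x - 1 ≠ 0 := sub_ne_zero.mpr hx
  have hkey := keypoly x m
  rw [pow_succ x m, hm, one_mul] at hkey
  rw [eq_div_iff h1]
  have : (x-1) * ((∑ j ∈ range m, (j:ℂ) * x ^ j) * (x-1)) = (x-1) * (m:ℂ) := by
    rw [← mul_assoc, mul_comm (x-1), mul_assoc]
    rw [show (x-1)*(x-1) = (x-1)^2 by ring, mul_comm _ ((x-1)^2), hkey]
    ring
  exact mul_left_cancel₀ h1 this

private lemma orth (w : ℂ) (m : ℕ) (hm : w ^ m = 1) :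
    ∑ k ∈ range m, w ^ k = if w = 1 then (m:ℂ) else 0 := by
  split_ifs with h
  · simp [h]
  · rw [geom_sum_eq h, hm]; simp

private lemma zeta_pow (m : ℕ) (hm : (m:ℂ) ≠ 0) (a : ℕ) :
    Complex.exp (2 * Real.pi * I / m) ^ a = Complex.exp (2 * Real.pi * (a / m) * I) := by
  rw [← Complex.exp_nat_mul]
  congr 1
  field_simp

private lemma zeta_pow_eq_one_iff (m : ℕ) (hm : 1 ≤ m) (a b : ℕ) (ha : a < m) (hb : b < m) :
    Complex.exp (2 * Real.pi * I / m) ^ a = Complex.exp (2 * Real.pi * I / m) ^ b ↔ a = b := by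
  have hm0 : (m:ℂ) ≠ 0 := Nat.cast_ne_zero.mpr (by omega)
  rw [zeta_pow m hm0, zeta_pow m hm0, Complex.exp_eq_exp_iff_exists_int]
  constructor
  · rintro ⟨t, ht⟩
    have hI : (2 * (Real.pi:ℂ) * I) ≠ 0 := by
      simp [Real.pi_ne_zero, I_ne_zero]
    have h2 : (a:ℂ) / m = (b:ℂ) / m + t := by
      have := ht
      rw [show 2 * (Real.pi:ℂ) * ((a:ℂ)/m) * I = (2 * (Real.pi:ℂ) * I) * ((a:ℂ)/m) by ring,
        show 2 * (Real.pi:ℂ) * ((b:ℂ)/m) * I + t * (2 * Real.pi * I)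
          = (2 * (Real.pi:ℂ) * I) * ((b:ℂ)/m + t) by ring] at this
      exact mul_left_cancel₀ hI this
    have h3 : (a:ℂ) = (b:ℂ) + t * m := by
      field_simp at h2
      linear_combination h2
    have h4 : (a:ℤ) = (b:ℤ) + t * m := by exact_mod_cast h3
    have hd : (m:ℤ) ∣ ((a:ℤ) - b) := ⟨t, by linarith⟩
    have h5 : (a:ℤ) - b = 0 := Int.eq_zero_of_abs_lt_dvd hd (by
      rw [abs_sub_lt_iff]; constructor <;> [exact_mod_cast (by omega : (a:ℤ) - b < m); skip]
      omega)
    omega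
  · rintro rfl; exact ⟨0, by simp⟩

private lemma sumP (m : ℕ) : ∑ j ∈ range m, (j:ℂ) = m * (m-1) / 2 := by
  induction m with
  | zero => simp
  | succ m ih => rw [Finset.sum_range_succ, ih]; push_cast; ring

private lemma sumQ (m : ℕ) : ∑ j ∈ range m, (j:ℂ) * (j:ℂ) = m * (m-1) * (2*m-1) / 6 := by
  induction m with
  | zero => simp
  | succ m ih => rw [Finset.sum_range_succ, ih]; push_cast; ring

private lemma complex_sum (m : ℕ) (hm : 1 ≤ m) :
    ∑ k ∈ Finset.Icc 1 (m-1),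
      1 / ((1 - Complex.exp (2*Real.pi*I/m) ^ k) *
           (1 - (Complex.exp (2*Real.pi*I/m))⁻¹ ^ k))
      = ((m:ℂ)^2 - 1) / 12 := by
  set ζ : ℂ := Complex.exp (2*Real.pi*I/m) with hζ
  have hm0 : (m:ℂ) ≠ 0 := Nat.cast_ne_zero.mpr (by omega)
  have hζ0 : ζ ≠ 0 := Complex.exp_ne_zero _
  have hζm : ζ ^ m = 1 := by
    rw [zeta_pow m hm0, div_self hm0, mul_one, Complex.exp_two_pi_mul_I]
  have hξm : (ζ⁻¹) ^ m = 1 := by rw [inv_pow, hζm, inv_one]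
  have hne1 : ∀ k, 1 ≤ k → k ≤ m - 1 → ζ ^ k ≠ 1 := by
    intro k h1 h2 h
    have : ζ ^ k = ζ ^ 0 := by simpa using h
    have := (zeta_pow_eq_one_iff m hm k 0 (by omega) (by omega)).mp this
    omega
  -- F k
  set F : ℕ → ℂ := fun k =>
    (∑ j ∈ range m, (j:ℂ) * (ζ^k) ^ j) * (∑ j ∈ range m, (j:ℂ) * ((ζ⁻¹)^k) ^ j) with hF
  have horth : ∀ j ∈ range m, ∀ l ∈ range m,
      ∑ k ∈ range m, (ζ^j * (ζ⁻¹)^l) ^ k = if j = l then (m:ℂ) else 0 := by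
    intro j hj l hl
    rw [orth _ m (by rw [mul_pow, ← pow_mul, ← pow_mul, mul_comm j m, mul_comm l m,
      pow_mul, pow_mul, hζm, hξm, one_pow, one_pow, one_mul])]
    refine if_congr ?_ rfl rfl
    rw [inv_pow, mul_inv_eq_one₀ (pow_ne_zero _ hζ0)]
    exact zeta_pow_eq_one_iff m hm j l (Finset.mem_range.mp hj) (Finset.mem_range.mp hl)
  have hFsum : ∑ k ∈ range m, F k = (m:ℂ) * ∑ j ∈ range m, (j:ℂ) * (j:ℂ) := by
    have : ∀ k, F k = ∑ j ∈ range m, ∑ l ∈ range m,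
        (j:ℂ) * (l:ℂ) * (ζ^j * (ζ⁻¹)^l) ^ k := by
      intro k
      simp only [hF]
      rw [Finset.sum_mul_sum]
      refine Finset.sum_congr rfl fun j _ => Finset.sum_congr rfl fun l _ => ?_
      rw [mul_pow, ← pow_mul, ← pow_mul, mul_comm k j, mul_comm k l, pow_mul, pow_mul]
      ring
    simp_rw [this]
    rw [Finset.sum_comm]
    rw [show ∑ j ∈ range m, ∑ k ∈ range m, ∑ l ∈ range m,
        (j:ℂ) * (l:ℂ) * (ζ^j * (ζ⁻¹)^l) ^ k
      = ∑ j ∈ range m, ∑ l ∈ range m, ∑ k ∈ range m,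
        (j:ℂ) * (l:ℂ) * (ζ^j * (ζ⁻¹)^l) ^ k from
      Finset.sum_congr rfl fun j _ => Finset.sum_comm]
    rw [Finset.mul_sum]
    refine Finset.sum_congr rfl fun j hj => ?_
    rw [show ∑ l ∈ range m, ∑ k ∈ range m, (j:ℂ) * (l:ℂ) * (ζ^j * (ζ⁻¹)^l) ^ k
      = ∑ l ∈ range m, (j:ℂ) * (l:ℂ) * (if j = l then (m:ℂ) else 0) from
      Finset.sum_congr rfl fun l hl => by
        rw [← Finset.mul_sum, horth j hj l hl]]
    simp [mul_ite, Finset.mem_range.mp hj, mul_comm]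
  have hterm : ∀ k, 1 ≤ k → k ≤ m - 1 →
      1 / ((1 - ζ ^ k) * (1 - (ζ⁻¹) ^ k)) = F k / ((m:ℂ) * m) := by
    intro k h1 h2
    have hx1 : ζ ^ k ≠ 1 := hne1 k h1 h2
    have hx2 : (ζ⁻¹) ^ k ≠ 1 := by
      rw [inv_pow, ne_eq, inv_eq_one]; exact hx1
    have hxm1 : (ζ^k) ^ m = 1 := by rw [← pow_mul, mul_comm, pow_mul, hζm, one_pow]
    have hxm2 : ((ζ⁻¹)^k) ^ m = 1 := by rw [← pow_mul, mul_comm, pow_mul, hξm, one_pow]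
    simp only [hF]
    rw [sumA _ m hxm1 hx1, sumA _ m hxm2 hx2]
    have d1 : (1:ℂ) - ζ^k ≠ 0 := sub_ne_zero.mpr (Ne.symm hx1)
    have d2 : (1:ℂ) - (ζ⁻¹)^k ≠ 0 := sub_ne_zero.mpr (Ne.symm hx2)
    have d3 : ζ^k - 1 ≠ 0 := sub_ne_zero.mpr hx1
    have d4 : (ζ⁻¹)^k - 1 ≠ 0 := sub_ne_zero.mpr hx2
    field_simp
    ring_nf
    rw [show (-1:ℂ) + ζ⁻¹ ^ k = -(1 - ζ⁻¹ ^ k) by ring, inv_neg]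
    ring
  have hins : range m = insert 0 (Finset.Icc 1 (m-1)) := by
    ext x; simp only [Finset.mem_range, Finset.mem_insert, Finset.mem_Icc]; omega
  have hF0 : F 0 = (∑ j ∈ range m, (j:ℂ)) * (∑ j ∈ range m, (j:ℂ)) := by
    simp [hF]
  have hIccF : ∑ k ∈ Finset.Icc 1 (m-1), F k
      = (m:ℂ) * (∑ j ∈ range m, (j:ℂ) * (j:ℂ)) - F 0 := by
    rw [← hFsum, hins, Finset.sum_insert (by simp)]
    ring
  rw [show ∑ k ∈ Finset.Icc 1 (m-1),
        (1:ℂ) / ((1 - ζ ^ k) * (1 - (ζ⁻¹) ^ k))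
      = ∑ k ∈ Finset.Icc 1 (m-1), F k / ((m:ℂ)*m) from
    Finset.sum_congr rfl fun k hk => by
      obtain ⟨h1, h2⟩ := Finset.mem_Icc.mp hk
      exact hterm k h1 h2]
  rw [← Finset.sum_div, hIccF, hF0, sumP, sumQ]
  field_simp
  ring

private lemma cast_prod_eq (m : ℕ) (hm : 1 ≤ m) (k : ℕ) :
    (1 - Complex.exp (2*Real.pi*I/m) ^ k) * (1 - (Complex.exp (2*Real.pi*I/m))⁻¹ ^ k)
      = ((2 - 2 * Real.cos (2*Real.pi*k/m) : ℝ) : ℂ) := by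
  have hm0 : (m:ℂ) ≠ 0 := Nat.cast_ne_zero.mpr (by omega)
  rw [inv_pow, zeta_pow m hm0 k, ← Complex.exp_neg]
  rw [show (2*(Real.pi:ℂ)*((k:ℂ)/m)*I) = ((2*Real.pi*k/m : ℝ):ℂ) * I by push_cast; ring]
  set r : ℝ := 2*Real.pi*k/m with hr
  push_cast
  rw [← Complex.ofReal_cos]
  push_cast
  have h1 : Complex.exp ((r:ℂ)*I) * Complex.exp (-((r:ℂ)*I)) = 1 := by
    rw [← Complex.exp_add, add_neg_cancel, Complex.exp_zero]
  have h2 : 2 * Complex.cos r = Complex.exp ((r:ℂ)*I) + Complex.exp (-(r:ℂ)*I) :=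
    Complex.two_cos r
  rw [neg_mul] at h2
  linear_combination h1 + h2

private lemma real_sum (m : ℕ) (hm : 1 ≤ m) :
    ∑ k ∈ Finset.Icc 1 (m-1), 1 / (2 - 2 * Real.cos (2*Real.pi*k/m))
      = ((m:ℝ)^2 - 1) / 12 := by
  apply Complex.ofReal_injective
  push_cast
  rw [← complex_sum m hm]
  refine Finset.sum_congr rfl fun k _ => ?_
  rw [cast_prod_eq m hm k]
  push_cast
  ring

theorem stmt2 (n : ℕ) (hn : 2 ≤ n) :
    ∑ k ∈ Finset.Icc 1 (n - 1),
      1 / (4 * Real.sin (Real.pi * k / (2 * n)) ^ 2) =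
      ((n : ℝ) ^ 2 - 1) / 6 := by
  set f : ℕ → ℝ := fun k => 1 / (4 * Real.sin (Real.pi * k / (2 * n)) ^ 2) with hf
  have hn0 : (n:ℝ) ≠ 0 := Nat.cast_ne_zero.mpr (by omega)
  have hfull : ∑ k ∈ Finset.Icc 1 (2*n - 1), f k = (4*(n:ℝ)^2 - 1)/12 := by
    calc ∑ k ∈ Finset.Icc 1 (2*n-1), f k
        = ∑ k ∈ Finset.Icc 1 (2*n-1),
            1/(2 - 2*Real.cos (2*Real.pi*k/((2*n : ℕ):ℝ))) := by
          refine Finset.sum_congr rfl fun k _ => ?_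
          simp only [hf]
          rw [show 2*Real.pi*(k:ℝ)/((2*n : ℕ):ℝ) = 2*(Real.pi*k/(2*n)) by
            push_cast; ring]
          rw [Real.cos_two_mul, Real.cos_sq']
          congr 1
          ring
      _ = (((2*n : ℕ):ℝ)^2 - 1)/12 := real_sum (2*n) (by omega)
      _ = (4*(n:ℝ)^2 - 1)/12 := by push_cast; ring
  have e1 : Finset.Icc 1 (2*n-1) = Finset.Icc 1 n ∪ Finset.Ioc n (2*n-1) := by
    ext x
    simp only [Finset.mem_Icc, Finset.mem_union, Finset.mem_Ioc]
    omega
  have hd1 : Disjoint (Finset.Icc 1 n) (Finset.Ioc n (2*n-1)) := by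
    simp only [Finset.disjoint_left, Finset.mem_Icc, Finset.mem_Ioc]
    omega
  have e2 : Finset.Icc 1 n = insert n (Finset.Icc 1 (n-1)) := by
    ext x
    simp only [Finset.mem_Icc, Finset.mem_insert]
    omega
  have hrefl : ∑ k ∈ Finset.Ioc n (2*n-1), f k = ∑ k ∈ Finset.Icc 1 (n-1), f k := by
    refine Finset.sum_nbij' (fun k => 2*n - k) (fun k => 2*n - k) ?_ ?_ ?_ ?_ ?_
    · intro a ha
      simp only [Finset.mem_Ioc] at ha
      simp only [Finset.mem_Icc]
      omega
    · intro a ha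
      simp only [Finset.mem_Icc] at ha
      simp only [Finset.mem_Ioc]
      omega
    · intro a ha
      simp only [Finset.mem_Ioc] at ha
      show 2*n - (2*n - a) = a
      omega
    · intro a ha
      simp only [Finset.mem_Icc] at ha
      show 2*n - (2*n - a) = a
      omega
    · intro a ha
      simp only [Finset.mem_Ioc] at ha
      simp only [hf]
      have hc : ((2*n - a : ℕ):ℝ) = 2*(n:ℝ) - a := by
        push_cast [Nat.cast_sub (by omega : a ≤ 2*n)]
        ring
      rw [hc, show Real.pi * (2*(n:ℝ) - a) / (2*n) = Real.pi - Real.pi * a / (2*n) by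
        field_simp]
      rw [Real.sin_pi_sub]
  have hfn : f n = 1/4 := by
    simp only [hf]
    rw [show Real.pi * (n:ℝ) / (2*n) = Real.pi / 2 by field_simp]
    rw [Real.sin_pi_div_two]
    norm_num
  have := hfull
  rw [e1, Finset.sum_union hd1, e2,
    Finset.sum_insert (by simp only [Finset.mem_Icc]; omega), hrefl, hfn] at this
  have goal' : ∑ k ∈ Finset.Icc 1 (n-1), f k = ((n:ℝ)^2 - 1)/6 := by linarith
  exact goal'
end

section
/- For any positive integer n, (1/n) · Σ_{l=1}^{n−1} 1/(2 − exp(2πil/n) − exp(−2πil/n)) = (1/12)(n − 1/n). -/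
open Finset

lemma sumA_s5 (n : ℕ) : (∑ k ∈ range n, (k:ℂ)) = ((n:ℂ)^2 - n)/2 := by
  induction n with
  | zero => simp
  | succ m ih => rw [sum_range_succ, ih]; push_cast; ring

lemma sumB (n : ℕ) : (∑ k ∈ range n, (k:ℂ)^2) = (2*(n:ℂ)^3 - 3*(n:ℂ)^2 + n)/6 := by
  induction n with
  | zero => simp
  | succ m ih => rw [sum_range_succ, ih]; push_cast; ring

lemma keyA (x : ℂ) (N : ℕ) :
    (1 - x) * ∑ k ∈ range N, (k:ℂ) * x^k
      = (∑ k ∈ range N, x^k) - 1 - ((N:ℂ) - 1) * x^N := by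
  induction N with
  | zero => simp
  | succ m ih =>
    rw [sum_range_succ, sum_range_succ, mul_add, ih]
    push_cast; ring

lemma keyB {ζ : ℂ} {n : ℕ} (hζn : ζ^n = 1) (hζ1 : ζ ≠ 1) :
    (1 - ζ) * ∑ k ∈ range n, (k:ℂ) * ζ^k = -(n:ℂ) := by
  rw [keyA, geom_sum_eq hζ1, hζn]
  ring

theorem stmt5 (n : ℕ) (hn : 1 ≤ n) :
    (1 / (n : ℂ)) * ∑ l ∈ Finset.Icc 1 (n - 1),
      1 / (2 - Complex.exp (2 * Real.pi * Complex.I * l / n)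
            - Complex.exp (-(2 * Real.pi * Complex.I * l / n))) =
      (1 / 12) * ((n : ℂ) - 1 / n) := by
  have hn0 : (n:ℂ) ≠ 0 := Nat.cast_ne_zero.mpr (by omega)
  set E : ℤ → ℂ := fun m => Complex.exp (2 * (Real.pi:ℂ) * Complex.I * m / n) with hE
  have hE0 : E 0 = 1 := by simp [hE]
  have hEadd : ∀ a b : ℤ, E (a + b) = E a * E b := by
    intro a b
    simp only [hE]
    rw [← Complex.exp_add]
    congr 1
    push_cast
    ring
  have hEpow : ∀ (m : ℤ) (l : ℕ), E m ^ l = E (m * l) := by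
    intro m l
    simp only [hE]
    rw [← Complex.exp_nat_mul]
    congr 1
    push_cast
    ring
  have hEn : ∀ k : ℤ, E ((n:ℤ) * k) = 1 := by
    intro k
    have h1 : (2 * (Real.pi:ℂ) * Complex.I * (((n:ℤ)*k : ℤ):ℂ) / n)
        = (k:ℂ) * (2 * (Real.pi:ℂ) * Complex.I) := by
      push_cast; field_simp
    simp only [hE]
    rw [h1]
    exact Complex.exp_int_mul_two_pi_mul_I k
  have hEne1 : ∀ m : ℤ, ¬ ((n:ℤ) ∣ m) → E m ≠ 1 := by
    intro m hdvd h1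
    simp only [hE] at h1
    rw [Complex.exp_eq_one_iff] at h1
    obtain ⟨k, hk⟩ := h1
    have hπ : (2 * (Real.pi:ℂ) * Complex.I) ≠ 0 := by
      simp [Real.pi_ne_zero, Complex.I_ne_zero]
    have hm : (m:ℂ) = (k:ℂ) * n := by
      field_simp at hk
      apply mul_left_cancel₀ hπ
      linear_combination (2 * (Real.pi:ℂ) * Complex.I) * hk
    have hmz : m = k * n := by exact_mod_cast hm
    exact hdvd ⟨k, by rw [hmz]; ring⟩
  have hgeo : ∀ m : ℤ, ¬((n:ℤ) ∣ m) → ∑ l ∈ range n, E ((l:ℤ) * m) = 0 := by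
    intro m hdvd
    have h1 : ∀ l ∈ range n, E ((l:ℤ) * m) = (E m)^l := by
      intro l _
      rw [hEpow]
      congr 1
      ring
    have h2 : (E m)^n = 1 := by
      rw [hEpow, mul_comm]
      exact hEn m
    rw [Finset.sum_congr rfl h1, geom_sum_eq (hEne1 m hdvd), h2]
    simp
  have hIcc : Finset.Icc 1 (n-1) = (range n).erase 0 := by
    ext x
    simp only [Finset.mem_Icc, Finset.mem_erase, Finset.mem_range]
    omega
  have hinner : ∀ k ∈ range n, ∀ j ∈ range n,
      (∑ l ∈ Finset.Icc 1 (n-1), E ((l:ℤ) * ((k:ℤ) - (j:ℤ))))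
        = (if k = j then (n:ℂ) else 0) - 1 := by
    intro k hk j hj
    rw [hIcc, Finset.sum_erase_eq_sub (by simp; omega)]
    congr 1
    · by_cases h : k = j
      · subst h
        simp [hE0]
      · rw [if_neg h]
        apply hgeo
        intro hd
        have hm0 : (k:ℤ) - j = 0 := by
          apply Int.eq_zero_of_abs_lt_dvd hd
          simp only [Finset.mem_range] at hk hj
          rw [abs_lt]
          omega
        exact h (by omega)
    · simp [hE0]
  -- per-term identity
  have hterm : ∀ l ∈ Finset.Icc 1 (n-1),
      (1:ℂ) / (2 - Complex.exp (2 * Real.pi * Complex.I * l / n)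
            - Complex.exp (-(2 * Real.pi * Complex.I * l / n)))
        = (1/(n:ℂ)^2) * ∑ k ∈ range n, ∑ j ∈ range n,
            (k:ℂ) * (j:ℂ) * E ((l:ℤ) * ((k:ℤ) - (j:ℤ))) := by
    intro l hl
    have hl' : 1 ≤ l ∧ l ≤ n - 1 := by simpa [Finset.mem_Icc] using hl
    have hexp1 : Complex.exp (2 * Real.pi * Complex.I * l / n) = E (l:ℤ) := by
      simp only [hE]; norm_num
    have hexp2 : Complex.exp (-(2 * Real.pi * Complex.I * l / n)) = E (-(l:ℤ)) := by
      simp only [hE]; congr 1; push_cast; ring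
    rw [hexp1, hexp2]
    have hnd : ¬ ((n:ℤ) ∣ (l:ℤ)) := by
      intro hd
      have h0 : (0:ℤ) < (l:ℤ) := by omega
      have := Int.le_of_dvd h0 hd
      omega
    have hnd2 : ¬ ((n:ℤ) ∣ (-(l:ℤ))) := by rwa [dvd_neg]
    have hζ1 := hEne1 _ hnd
    have hζ'1 := hEne1 _ hnd2
    have hζn : (E (l:ℤ))^n = 1 := by rw [hEpow, mul_comm]; exact hEn _
    have hζ'n : (E (-(l:ℤ)))^n = 1 := by rw [hEpow, mul_comm]; exact hEn _
    have hS := keyB hζn hζ1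
    have hS' := keyB hζ'n hζ'1
    set S := ∑ k ∈ range n, (k:ℂ) * (E (l:ℤ))^k with hSdef
    set S' := ∑ k ∈ range n, (k:ℂ) * (E (-(l:ℤ)))^k with hS'def
    have hζζ' : E (l:ℤ) * E (-(l:ℤ)) = 1 := by
      rw [← hEadd]; simpa using hE0
    have h2 : (2 - E (l:ℤ) - E (-(l:ℤ))) * (S * S') = (n:ℂ)^2 := by
      have h3 : (2 - E (l:ℤ) - E (-(l:ℤ))) * (S * S')
          = ((1 - E (l:ℤ)) * S) * ((1 - E (-(l:ℤ))) * S') := by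
        linear_combination (-(S*S')) * hζζ'
      rw [h3, hS, hS']; ring
    have hne : (2 - E (l:ℤ) - E (-(l:ℤ))) ≠ 0 := by
      intro h0
      rw [h0, zero_mul] at h2
      exact (pow_ne_zero 2 hn0) h2.symm
    have hprod : ∀ k j : ℕ, ((k:ℂ) * (E (l:ℤ))^k) * ((j:ℂ) * (E (-(l:ℤ)))^j)
        = (k:ℂ)*(j:ℂ) * E ((l:ℤ) * ((k:ℤ) - (j:ℤ))) := by
      intro k j
      rw [hEpow, hEpow,
        show ((l:ℤ) * ((k:ℤ) - (j:ℤ))) = (l:ℤ)*(k:ℤ) + (-(l:ℤ))*(j:ℤ) from by ring,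
        hEadd]
      ring
    have h4 : S * S' = ∑ k ∈ range n, ∑ j ∈ range n,
        (k:ℂ) * (j:ℂ) * E ((l:ℤ) * ((k:ℤ) - (j:ℤ))) := by
      rw [hSdef, hS'def, Finset.sum_mul_sum]
      exact Finset.sum_congr rfl fun k _ => Finset.sum_congr rfl fun j _ => hprod k j
    rw [← h4]
    field_simp
    linear_combination -h2
  rw [Finset.sum_congr rfl hterm, ← Finset.mul_sum]
  have hswap : ∑ l ∈ Finset.Icc 1 (n-1), ∑ k ∈ range n, ∑ j ∈ range n,
      (k:ℂ) * (j:ℂ) * E ((l:ℤ) * ((k:ℤ) - (j:ℤ)))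
      = ∑ k ∈ range n, ∑ j ∈ range n, (k:ℂ)*(j:ℂ)*((if k=j then (n:ℂ) else 0)-1) := by
    rw [Finset.sum_comm]
    refine Finset.sum_congr rfl fun k hk => ?_
    rw [Finset.sum_comm]
    refine Finset.sum_congr rfl fun j hj => ?_
    rw [← Finset.mul_sum, hinner k hk j hj]
  have hbig : ∑ k ∈ range n, ∑ j ∈ range n, (k:ℂ)*(j:ℂ)*((if k=j then (n:ℂ) else 0)-1)
      = (n:ℂ) * (∑ k ∈ range n, (k:ℂ)^2) - (∑ k ∈ range n, (k:ℂ))^2 := by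
    have h1 : ∀ k ∈ range n, ∑ j ∈ range n, (k:ℂ)*(j:ℂ)*((if k=j then (n:ℂ) else 0)-1)
        = (n:ℂ)*(k:ℂ)^2 - (k:ℂ)*(∑ j ∈ range n, (j:ℂ)) := by
      intro k hk
      have e1 : ∀ j : ℕ, (k:ℂ)*(j:ℂ)*((if k=j then (n:ℂ) else 0)-1)
          = (if k = j then (n:ℂ)*(j:ℂ)*(k:ℂ) else 0) - (k:ℂ)*(j:ℂ) := by
        intro j; split_ifs with h <;> ring
      simp only [e1]
      rw [Finset.sum_sub_distrib, Finset.sum_ite_eq, if_pos hk, ← Finset.mul_sum]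
      ring
    rw [Finset.sum_congr rfl h1, Finset.sum_sub_distrib, ← Finset.mul_sum,
      ← Finset.sum_mul, sq]
  rw [hswap, hbig, sumA_s5, sumB]
  field_simp
  ring
end

section
/- For the dicyclic group Dic_n (n ≥ 2) of order 4n acting on ℂ² via a ↦ diag(exp(πi/n), exp(−πi/n)) and x ↦ [[0,1],[−1,0]], the sum over nontrivial conjugacy classes (g) of 1/(|C(g)|·(2 − tr(g))), where C(g) is the centralizer of g and tr(g) the trace of its action on ℂ², equals (1/12)(n + 3 − 1/(4n)). -/
open Complex

/-- The standard 2-dimensional representation of the dicyclic group `Dic n`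
(`QuaternionGroup n` in Mathlib), sending `a ↦ diag(exp(πi/n), exp(−πi/n))` and
`x ↦ [[0,1],[−1,0]]`; thus `a^i ↦ diag(e_i, e_i⁻¹)` and `x a^i ↦ [[0, e_i⁻¹],[−e_i, 0]]`
where `e_i = exp(πi·i/n)`. -/
noncomputable def dicRep (n : ℕ) : QuaternionGroup n → Matrix (Fin 2) (Fin 2) ℂ
  | .a i => !![Complex.exp (Real.pi * Complex.I * i.val / n), 0;
               0, Complex.exp (-(Real.pi * Complex.I * i.val / n))]
  | .xa i => !![0, Complex.exp (-(Real.pi * Complex.I * i.val / n));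
                -Complex.exp (Real.pi * Complex.I * i.val / n), 0]

open Finset

namespace Stmt18Aux

/-- sum of k over range m, in ℂ -/
lemma sum_cast_range (m : ℕ) : ∑ k ∈ range m, (k : ℂ) = m * (m - 1) / 2 := by
  induction m with
  | zero => simp
  | succ m ih => rw [Finset.sum_range_succ, ih]; push_cast; ring

lemma sum_sq_range (m : ℕ) : ∑ k ∈ range m, (k : ℂ) ^ 2 = m * (m - 1) * (2 * m - 1) / 6 := by
  induction m with
  | zero => simp
  | succ m ih => rw [Finset.sum_range_succ, ih]; push_cast; ring

lemma key1 (m : ℕ) (z : ℂ) (hz : z ^ m = 1) (h1 : z ≠ 1) :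
    (z - 1) * ∑ k ∈ range m, (k : ℂ) * z ^ k = m := by
  have hgeom : ∑ k ∈ range m, z ^ k = 0 := by
    rw [geom_sum_eq h1, hz, sub_self, zero_div]
  have h2 : (z - 1) * ∑ k ∈ range m, (k : ℂ) * z ^ k
      = (∑ k ∈ range m, (((k:ℂ)+1) * z ^ (k+1) - (k:ℂ) * z ^ k)) - z * ∑ k ∈ range m, z ^ k := by
    rw [Finset.mul_sum, Finset.mul_sum, ← Finset.sum_sub_distrib]
    apply Finset.sum_congr rfl
    intro k _
    ring
  have h3 : (∑ k ∈ range m, (((k:ℂ)+1) * z ^ (k+1) - (k:ℂ) * z ^ k)) = (m : ℂ) * z ^ m := by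
    have := Finset.sum_range_sub (fun k => (k : ℂ) * z ^ k) m
    simpa using this
  rw [h2, h3, hgeom, hz, mul_zero, sub_zero, mul_one]


section Omega

variable {n : ℕ} (hn : 2 ≤ n)

noncomputable def om (n : ℕ) : ℂ := Complex.exp (Real.pi * Complex.I / n)

lemma om_ne_zero (n : ℕ) : om n ≠ 0 := Complex.exp_ne_zero _

lemma om_pow (v : ℕ) : om n ^ v = Complex.exp (Real.pi * Complex.I * v / n) := by
  rw [om, ← Complex.exp_nat_mul]
  congr 1
  ring

include hn

lemma nC_ne_zero : (n : ℂ) ≠ 0 := by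
  exact_mod_cast (by omega : n ≠ 0)

lemma om_pow_two_n : om n ^ (2 * n) = 1 := by
  rw [om_pow]
  have h : (Real.pi : ℂ) * Complex.I * (2 * n) / n = 2 * Real.pi * Complex.I := by
    field_simp [nC_ne_zero hn]
  push_cast
  rw [h, Complex.exp_two_pi_mul_I]

lemma om_pow_n : om n ^ n = -1 := by
  rw [om_pow]
  have h : (Real.pi : ℂ) * Complex.I * n / n = Real.pi * Complex.I := by
    field_simp [nC_ne_zero hn]
  rw [h, Complex.exp_pi_mul_I]

lemma om_pow_ne_one {d : ℕ} (h0 : 0 < d) (hd : d < 2 * n) : om n ^ d ≠ 1 := by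
  rw [om_pow]
  intro h
  rw [Complex.exp_eq_one_iff] at h
  obtain ⟨k, hk⟩ := h
  have hπ : (Real.pi : ℂ) ≠ 0 := by
    exact_mod_cast Real.pi_ne_zero
  have h3 : (d : ℂ) * (Real.pi * Complex.I) = (2 * k * n) * (Real.pi * Complex.I) := by
    have hne := nC_ne_zero hn
    field_simp at hk
    linear_combination (Real.pi * Complex.I) * hk
  have h4 := mul_right_cancel₀ (mul_ne_zero hπ Complex.I_ne_zero) h3
  have h5 : (d : ℤ) = 2 * k * n := by exact_mod_cast h4
  have hd' : (d : ℤ) < 2 * n := by exact_mod_cast hd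
  have h0' : (0 : ℤ) < d := by exact_mod_cast h0
  rcases le_or_gt k 0 with hk0 | hk0
  · nlinarith
  · nlinarith

lemma om_pow_inj {j k : ℕ} (hj : j < 2 * n) (hk : k < 2 * n) (h : om n ^ j = om n ^ k) :
    j = k := by
  rcases lt_trichotomy j k with hlt | heq | hgt
  · exfalso
    apply om_pow_ne_one hn (d := k - j) (by omega) (by omega)
    have h2 : om n ^ j * om n ^ (k - j) = om n ^ j * 1 := by
      rw [← pow_add, show j + (k - j) = k from by omega, mul_one, h]
    exact mul_left_cancel₀ (pow_ne_zero _ (om_ne_zero n)) h2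
  · exact heq
  · exfalso
    apply om_pow_ne_one hn (d := j - k) (by omega) (by omega)
    have h2 : om n ^ k * om n ^ (j - k) = om n ^ k * 1 := by
      rw [← pow_add, show k + (j - k) = j from by omega, mul_one, h]
    exact mul_left_cancel₀ (pow_ne_zero _ (om_ne_zero n)) h2

lemma orth {j k : ℕ} (hj : j < 2 * n) (hk : k < 2 * n) :
    ∑ l ∈ range (2 * n), (om n ^ j * (om n ^ k)⁻¹) ^ l
      = if j = k then ((2 * n : ℕ) : ℂ) else 0 := by
  split_ifs with hjk
  · subst hjk
    rw [mul_inv_cancel₀ (pow_ne_zero _ (om_ne_zero n))]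
    simp
  · have hp : ∀ d : ℕ, (om n ^ d) ^ (2 * n) = 1 := by
      intro d
      rw [← pow_mul, mul_comm d (2 * n), pow_mul, om_pow_two_n hn, one_pow]
    have hzm : (om n ^ j * (om n ^ k)⁻¹) ^ (2 * n) = 1 := by
      rw [mul_pow, inv_pow, hp, hp, inv_one, mul_one]
    have hz1 : om n ^ j * (om n ^ k)⁻¹ ≠ 1 := by
      intro h
      apply hjk
      apply om_pow_inj hn hj hk
      field_simp at h
      exact (div_eq_one_iff_eq (pow_ne_zero _ (om_ne_zero n))).mp h
    rw [geom_sum_eq hz1, hzm, sub_self, zero_div]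


omit hn in
lemma pow_swap (x : ℂ) (l j k : ℕ) :
    (x ^ l) ^ j * ((x ^ l)⁻¹) ^ k = (x ^ j * (x ^ k)⁻¹) ^ l := by
  rw [inv_pow, ← pow_mul, ← pow_mul, mul_pow, inv_pow, ← pow_mul, ← pow_mul,
    mul_comm l j, mul_comm l k]

noncomputable def AA (n l : ℕ) : ℂ := ∑ k ∈ range (2 * n), (k : ℂ) * (om n ^ l) ^ k

noncomputable def BB (n l : ℕ) : ℂ := ∑ k ∈ range (2 * n), (k : ℂ) * ((om n ^ l)⁻¹) ^ k

lemma Psum : ∑ l ∈ range (2 * n), AA n l * BB n l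
    = ((2 * n : ℕ) : ℂ) * ∑ j ∈ range (2 * n), (j : ℂ) ^ 2 := by
  have step1 : ∑ l ∈ range (2 * n), AA n l * BB n l
      = ∑ l ∈ range (2 * n), ∑ j ∈ range (2 * n), ∑ k ∈ range (2 * n),
          ((j : ℂ) * (k : ℂ)) * ((om n ^ j * (om n ^ k)⁻¹) ^ l) := by
    refine Finset.sum_congr rfl fun l _ => ?_
    rw [AA, BB, Finset.sum_mul_sum]
    refine Finset.sum_congr rfl fun j _ => Finset.sum_congr rfl fun k _ => ?_
    rw [← pow_swap (om n) l j k]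
    ring
  rw [step1, Finset.sum_comm]
  have step2 : ∀ j ∈ range (2 * n),
      (∑ l ∈ range (2 * n), ∑ k ∈ range (2 * n),
        ((j : ℂ) * (k : ℂ)) * ((om n ^ j * (om n ^ k)⁻¹) ^ l))
      = (j : ℂ) ^ 2 * ((2 * n : ℕ) : ℂ) := by
    intro j hj
    rw [Finset.sum_comm]
    have step3 : ∀ k ∈ range (2 * n),
        (∑ l ∈ range (2 * n), ((j : ℂ) * (k : ℂ)) * ((om n ^ j * (om n ^ k)⁻¹) ^ l))
        = ((j : ℂ) * (k : ℂ)) * (if j = k then ((2 * n : ℕ) : ℂ) else 0) := by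
      intro k hk
      rw [← Finset.mul_sum, orth hn (Finset.mem_range.mp hj) (Finset.mem_range.mp hk)]
    rw [Finset.sum_congr rfl step3]
    rw [Finset.sum_eq_single j]
    · rw [if_pos rfl]; ring
    · intro k _ hkj
      rw [if_neg (fun h => hkj h.symm), mul_zero]
    · intro h; exact absurd hj h
  rw [Finset.sum_congr rfl step2, ← Finset.sum_mul, mul_comm]

omit hn in
lemma AA_zero : AA n 0 = ((2*n:ℕ):ℂ) * (((2*n:ℕ):ℂ) - 1) / 2 := by
  rw [AA, ← sum_cast_range (2*n)]
  refine Finset.sum_congr rfl fun k _ => ?_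
  simp

omit hn in
lemma BB_zero : BB n 0 = ((2*n:ℕ):ℂ) * (((2*n:ℕ):ℂ) - 1) / 2 := by
  rw [BB, ← sum_cast_range (2*n)]
  refine Finset.sum_congr rfl fun k _ => ?_
  simp

lemma inv_prod {l : ℕ} (h0 : 0 < l) (h2 : l < 2 * n) :
    1 / ((1 - om n ^ l) * (1 - (om n ^ l)⁻¹)) = AA n l * BB n l / ((2*n:ℕ):ℂ) ^ 2 := by
  set z := om n ^ l with hz
  have hm : ((2*n:ℕ):ℂ) ≠ 0 := by
    have : (2*n:ℕ) ≠ 0 := by omega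
    exact_mod_cast this
  have hzm : z ^ (2*n) = 1 := by
    rw [hz, ← pow_mul, mul_comm l (2*n), pow_mul, om_pow_two_n hn, one_pow]
  have hz1 : z ≠ 1 := om_pow_ne_one hn h0 h2
  have hz0 : z ≠ 0 := pow_ne_zero _ (om_ne_zero n)
  have hizm : z⁻¹ ^ (2*n) = 1 := by rw [inv_pow, hzm, inv_one]
  have hiz1 : z⁻¹ ≠ 1 := fun h => hz1 (by rw [← inv_inv z, h, inv_one])
  have e1 := key1 (2*n) z hzm hz1
  have e2 := key1 (2*n) z⁻¹ hizm hiz1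
  have hprod : AA n l * BB n l * ((1 - z) * (1 - z⁻¹)) = ((2*n:ℕ):ℂ) ^ 2 := by
    rw [AA, BB, ← hz]
    linear_combination ((z⁻¹ - 1) * ∑ k ∈ range (2*n), (k:ℂ) * (z⁻¹) ^ k) * e1
      + ((2*n:ℕ):ℂ) * e2
  have hne : (1 - z) * (1 - z⁻¹) ≠ 0 := by
    intro h0'
    apply pow_ne_zero 2 hm
    rw [← hprod, h0', mul_zero]
  rw [div_eq_div_iff hne (pow_ne_zero 2 hm)]
  linear_combination -hprod

lemma Tsum : ∑ l ∈ Finset.Ioc 0 (2*n - 1), 1 / ((1 - om n ^ l) * (1 - (om n ^ l)⁻¹))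
    = (((2*n:ℕ):ℂ) ^ 2 - 1) / 12 := by
  have hm : ((2*n:ℕ):ℂ) ≠ 0 := by
    have : (2*n:ℕ) ≠ 0 := by omega
    exact_mod_cast this
  have herase : (range (2*n)).erase 0 = Finset.Ioc 0 (2*n - 1) := by
    ext x
    simp only [Finset.mem_erase, Finset.mem_range, Finset.mem_Ioc]
    omega
  have hsplit : ∑ l ∈ range (2*n), AA n l * BB n l
      = AA n 0 * BB n 0 + ∑ l ∈ Finset.Ioc 0 (2*n - 1), AA n l * BB n l := by
    rw [← herase]
    exact (Finset.add_sum_erase _ (fun l => AA n l * BB n l)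
      (Finset.mem_range.mpr (by omega : 0 < 2*n))).symm
  have hIoc : ∑ l ∈ Finset.Ioc 0 (2*n - 1), 1 / ((1 - om n ^ l) * (1 - (om n ^ l)⁻¹))
      = (∑ l ∈ Finset.Ioc 0 (2*n - 1), AA n l * BB n l) / ((2*n:ℕ):ℂ) ^ 2 := by
    rw [Finset.sum_div]
    refine Finset.sum_congr rfl fun l hl => ?_
    obtain ⟨hl0, hl1⟩ := Finset.mem_Ioc.mp hl
    exact inv_prod hn hl0 (by omega)
  have hval : ∑ l ∈ Finset.Ioc 0 (2*n - 1), AA n l * BB n l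
      = ((2*n:ℕ):ℂ) * (((2*n:ℕ):ℂ) * (((2*n:ℕ):ℂ) - 1) * (2 * ((2*n:ℕ):ℂ) - 1) / 6)
        - (((2*n:ℕ):ℂ) * (((2*n:ℕ):ℂ) - 1) / 2) ^ 2 := by
    have := hsplit
    rw [Psum hn, AA_zero, BB_zero, sum_sq_range] at this
    linear_combination -this
  rw [hIoc, hval]
  have hn0 : (n:ℂ) ≠ 0 := nC_ne_zero hn
  have hm' : ((2*n:ℕ):ℂ) = 2 * (n:ℂ) := by push_cast; ring
  rw [hm']
  field_simp
  ring

lemma om_reflect {l : ℕ} (hl : l ≤ 2 * n) : om n ^ (2 * n - l) = (om n ^ l)⁻¹ := by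
  have h : om n ^ (2 * n - l) * om n ^ l = 1 := by
    rw [← pow_add, show 2*n - l + l = 2*n from by omega, om_pow_two_n hn]
  exact eq_inv_of_mul_eq_one_left h

lemma Ssum : ∑ l ∈ Finset.Ioc 0 (n - 1), 1 / ((1 - om n ^ l) * (1 - (om n ^ l)⁻¹))
    = ((n:ℂ) ^ 2 - 1) / 6 := by
  set f : ℕ → ℂ := fun l => 1 / ((1 - om n ^ l) * (1 - (om n ^ l)⁻¹)) with hf
  have hsplit : ∑ l ∈ Finset.Ioc 0 n, f l + ∑ l ∈ Finset.Ioc n (2*n-1), f l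
      = ∑ l ∈ Finset.Ioc 0 (2*n-1), f l :=
    Finset.sum_Ioc_consecutive f (by omega) (by omega)
  have htop : ∑ l ∈ Finset.Ioc 0 n, f l = ∑ l ∈ Finset.Ioc 0 (n-1), f l + f n := by
    have := Finset.sum_Ioc_succ_top (by omega : 0 ≤ n - 1) f
    rw [show n - 1 + 1 = n from by omega] at this
    exact this
  have hrefl : ∑ l ∈ Finset.Ioc n (2*n-1), f l = ∑ l ∈ Finset.Ioc 0 (n-1), f l := by
    refine Finset.sum_bij' (fun l _ => 2*n - l) (fun l _ => 2*n - l) ?_ ?_ ?_ ?_ ?_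
    · intro a ha
      simp only [Finset.mem_Ioc] at ha ⊢
      omega
    · intro a ha
      simp only [Finset.mem_Ioc] at ha ⊢
      omega
    · intro a ha
      simp only [Finset.mem_Ioc] at ha
      omega
    · intro a ha
      simp only [Finset.mem_Ioc] at ha
      omega
    · intro a ha
      simp only [Finset.mem_Ioc] at ha
      rw [hf]
      simp only
      rw [om_reflect hn (by omega), inv_inv]
      ring
  have hfn : f n = 1 / 4 := by
    rw [hf]
    simp only
    rw [om_pow_n hn]
    norm_num
  have hT := Tsum hn
  rw [← hsplit, htop, hrefl, hfn] at hT
  have hcast : ((2*n:ℕ):ℂ) = 2 * (n:ℂ) := by push_cast; ring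
  rw [hcast] at hT
  linear_combination hT / 2

end Omega

section GroupPart

open QuaternionGroup

variable {n : ℕ} (hn : 2 ≤ n)

lemma qa_inv (i : ZMod (2*n)) : (a i : QuaternionGroup n)⁻¹ = a (-i) :=
  inv_eq_of_mul_eq_one_right (by rw [a_mul_a, add_neg_cancel]; exact one_def.symm)

lemma two_n_cast : ((n : ZMod (2*n)) + n) = 0 := by
  have h : ((2*n : ℕ) : ZMod (2*n)) = 0 := ZMod.natCast_self _
  push_cast at h
  linear_combination h

lemma qxa_inv (i : ZMod (2*n)) : (xa i : QuaternionGroup n)⁻¹ = xa ((n : ZMod (2*n)) + i) := by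
  refine inv_eq_of_mul_eq_one_right ?_
  rw [xa_mul_xa]
  have h : (n : ZMod (2*n)) + (n + i) - i = 0 := by
    have := two_n_cast (n := n)
    linear_combination this
  rw [h]
  exact one_def.symm

lemma conj_aa (j i : ZMod (2*n)) : (a j : QuaternionGroup n) * a i * (a j)⁻¹ = a i := by
  rw [qa_inv, a_mul_a, a_mul_a]
  congr 1
  ring

lemma conj_xa_a (j i : ZMod (2*n)) : (xa j : QuaternionGroup n) * a i * (xa j)⁻¹ = a (-i) := by
  rw [qxa_inv, xa_mul_a, xa_mul_xa]
  congr 1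
  have := two_n_cast (n := n)
  linear_combination this

lemma conj_a_xa (j i : ZMod (2*n)) :
    (a j : QuaternionGroup n) * xa i * (a j)⁻¹ = xa (i - 2*j) := by
  rw [qa_inv, a_mul_xa, xa_mul_a]
  congr 1
  ring

lemma conj_xa_xa (j i : ZMod (2*n)) :
    (xa j : QuaternionGroup n) * xa i * (xa j)⁻¹ = xa (2*j - i) := by
  rw [qxa_inv, xa_mul_xa, a_mul_xa]
  congr 1
  ring

lemma isConj_a_cases {i : ZMod (2*n)} {g : QuaternionGroup n} (h : IsConj (a i) g) :
    g = a i ∨ g = a (-i) := by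
  obtain ⟨u, hu⟩ := isConj_iff.mp h
  rcases u with j | j
  · left; rw [← hu, conj_aa]
  · right; rw [← hu, conj_xa_a]

lemma isConj_xa_cases {i : ZMod (2*n)} {g : QuaternionGroup n} (h : IsConj (xa i) g) :
    ∃ j, g = xa (i + 2*j) := by
  obtain ⟨u, hu⟩ := isConj_iff.mp h
  rcases u with j | j
  · exact ⟨-j, by rw [← hu, conj_a_xa]; congr 1; ring⟩
  · exact ⟨j - i, by rw [← hu, conj_xa_xa]; congr 1; ring⟩

lemma isConj_a_neg (i : ZMod (2*n)) : IsConj (a i : QuaternionGroup n) (a (-i)) :=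
  isConj_iff.mpr ⟨xa 0, conj_xa_a 0 i⟩

lemma isConj_xa_shift (i j : ZMod (2*n)) :
    IsConj (xa i : QuaternionGroup n) (xa (i + 2*j)) :=
  isConj_iff.mpr ⟨a (-j), by rw [conj_a_xa]; congr 1; ring⟩

include hn

lemma two_mul_eq_zero_iff {j : ZMod (2*n)} : 2 * j = 0 ↔ j = 0 ∨ j = (n : ZMod (2*n)) := by
  haveI : NeZero (2*n) := ⟨by omega⟩
  constructor
  · intro h
    have hv := ZMod.val_lt j
    have h2 : ((2 * j.val : ℕ) : ZMod (2*n)) = 0 := by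
      push_cast
      rw [ZMod.natCast_zmod_val]
      exact h
    have hdvd := (ZMod.natCast_eq_zero_iff _ _).mp h2
    obtain ⟨c, hc⟩ := hdvd
    have hc2 : c < 2 := by nlinarith
    have hval : j.val = 0 ∨ j.val = n := by interval_cases c <;> omega
    rcases hval with hval | hval
    · left
      rw [← ZMod.natCast_zmod_val j, hval, Nat.cast_zero]
    · right
      rw [← ZMod.natCast_zmod_val j, hval]
  · rintro (rfl | rfl)
    · rw [mul_zero]
    · have := two_n_cast (n := n)
      linear_combination this

lemma n_cast_ne_zero : (n : ZMod (2*n)) ≠ 0 := by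
  haveI : NeZero (2*n) := ⟨by omega⟩
  intro h
  have := ZMod.val_cast_of_lt (show n < 2*n by omega)
  rw [h, ZMod.val_zero] at this
  omega

omit hn in
lemma card_cent_a {i : ZMod (2*n)} (hi : 2 * i ≠ 0) :
    Nat.card (Subgroup.centralizer {(a i : QuaternionGroup n)}
      : Subgroup (QuaternionGroup n)) = 2 * n := by
  have hset : ((Subgroup.centralizer {(a i : QuaternionGroup n)}) : Set (QuaternionGroup n))
      = Set.range (QuaternionGroup.a) := by
    ext g
    simp only [SetLike.mem_coe, Subgroup.mem_centralizer_singleton_iff, Set.mem_range]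
    constructor
    · intro hg
      rcases g with j | j
      · exact ⟨j, rfl⟩
      · exfalso
        rw [xa_mul_a, a_mul_xa] at hg
        apply hi
        have h2 : j + i = j - i := by injection hg
        linear_combination h2
    · rintro ⟨j, rfl⟩
      rw [a_mul_a, a_mul_a, add_comm]
  have e1 : Nat.card (Subgroup.centralizer {(a i : QuaternionGroup n)})
      = Nat.card (Set.range (QuaternionGroup.a : ZMod (2*n) → QuaternionGroup n)) :=
    Nat.card_congr (Equiv.setCongr hset)
  rw [e1, Nat.card_range_of_injective (fun x y h => by injection h), Nat.card_zmod]

omit hn in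
lemma cent_central {i : ZMod (2*n)} (hi : 2 * i = 0) :
    Subgroup.centralizer {(a i : QuaternionGroup n)} = ⊤ := by
  rw [eq_top_iff]
  intro g _
  rw [Subgroup.mem_centralizer_singleton_iff]
  rcases g with j | j
  · rw [a_mul_a, a_mul_a, add_comm]
  · rw [xa_mul_a, a_mul_xa]
    congr 1
    linear_combination hi

lemma card_cent_central {i : ZMod (2*n)} (hi : 2 * i = 0) :
    Nat.card (Subgroup.centralizer {(a i : QuaternionGroup n)}
      : Subgroup (QuaternionGroup n)) = 4 * n := by
  haveI : NeZero n := ⟨by omega⟩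
  rw [cent_central hi, Subgroup.card_top, Nat.card_eq_fintype_card, QuaternionGroup.card]

lemma card_cent_xa (i : ZMod (2*n)) :
    Nat.card (Subgroup.centralizer {(xa i : QuaternionGroup n)}
      : Subgroup (QuaternionGroup n)) = 4 := by
  haveI : NeZero n := ⟨by omega⟩
  have hset : ((Subgroup.centralizer {(xa i : QuaternionGroup n)}) : Set (QuaternionGroup n))
      = {a 0, a (n : ZMod (2*n)), xa i, xa ((n : ZMod (2*n)) + i)} := by
    ext g
    simp only [SetLike.mem_coe, Subgroup.mem_centralizer_singleton_iff, Set.mem_insert_iff,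
      Set.mem_singleton_iff]
    rcases g with j | j
    · rw [a_mul_xa, xa_mul_a]
      constructor
      · intro hg
        have h2 : i - j = i + j := by injection hg
        have h3 : 2 * j = 0 := by linear_combination -h2
        rcases (two_mul_eq_zero_iff hn).mp h3 with rfl | rfl
        · left; rfl
        · right; left; rfl
      · intro hg
        have hj : j = 0 ∨ j = (n : ZMod (2*n)) := by
          rcases hg with h | h | h | h
          · exact Or.inl (by injection h)
          · exact Or.inr (by injection h)
          · exact absurd h (by simp)
          · exact absurd h (by simp)
        have h3 : 2 * j = 0 := (two_mul_eq_zero_iff hn).mpr hj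
        congr 1
        linear_combination -h3
    · rw [xa_mul_xa, xa_mul_xa]
      constructor
      · intro hg
        have h2 : (n : ZMod (2*n)) + i - j = (n : ZMod (2*n)) + j - i := by injection hg
        have h3 : 2 * (j - i) = 0 := by linear_combination -h2
        rcases (two_mul_eq_zero_iff hn).mp h3 with h4 | h4
        · right; right; left
          congr 1
          linear_combination h4
        · right; right; right
          congr 1
          linear_combination h4
      · intro hg
        have hj : j = i ∨ j = (n : ZMod (2*n)) + i := by
          rcases hg with h | h | h | h
          · exact absurd h (by intro h'; cases h')
          · exact absurd h (by simp)
          · exact Or.inl (by injection h)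
          · exact Or.inr (by injection h)
        congr 1
        rcases hj with rfl | rfl
        · rfl
        · have h3 : 2 * ((n : ZMod (2*n)) + i - i) = 0 := by
            have := two_n_cast (n := n)
            linear_combination this
          linear_combination -h3
  have e1 : Nat.card (Subgroup.centralizer {(xa i : QuaternionGroup n)})
      = Nat.card ({a 0, a (n : ZMod (2*n)), xa i, xa ((n : ZMod (2*n)) + i)}
          : Set (QuaternionGroup n)) :=
    Nat.card_congr (Equiv.setCongr hset)
  rw [e1, Nat.card_coe_set_eq]
  have hne1 : (a 0 : QuaternionGroup n) ≠ a (n : ZMod (2*n)) := by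
    intro h
    exact n_cast_ne_zero hn (by injection h with h'; exact h'.symm)
  have hne2 : (xa i : QuaternionGroup n) ≠ xa ((n : ZMod (2*n)) + i) := by
    intro h
    apply n_cast_ne_zero hn
    have h' : i = (n : ZMod (2*n)) + i := by injection h
    linear_combination -h'
  rw [Set.ncard_insert_of_notMem (by
      simp only [Set.mem_insert_iff, Set.mem_singleton_iff, not_or]
      exact ⟨hne1, fun h => (by cases h), fun h => (by cases h)⟩), Set.ncard_insert_of_notMem (by simp),
    Set.ncard_pair hne2]

omit hn in
lemma trace_dicRep_a (i : ZMod (2*n)) :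
    Matrix.trace (dicRep n (QuaternionGroup.a i)) = om n ^ i.val + (om n ^ i.val)⁻¹ := by
  show Matrix.trace !![Complex.exp (Real.pi * Complex.I * i.val / n), 0;
      0, Complex.exp (-(Real.pi * Complex.I * i.val / n))] = _
  rw [Matrix.trace_fin_two_of, Complex.exp_neg, om_pow]

omit hn in
lemma trace_dicRep_xa (i : ZMod (2*n)) :
    Matrix.trace (dicRep n (QuaternionGroup.xa i)) = 0 := by
  show Matrix.trace !![0, Complex.exp (-(Real.pi * Complex.I * i.val / n));
      -Complex.exp (Real.pi * Complex.I * i.val / n), 0] = 0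
  rw [Matrix.trace_fin_two_of, add_zero]

end GroupPart

section Eval

open QuaternionGroup

variable {n : ℕ} (hn : 2 ≤ n)

noncomputable def FF (n : ℕ) (c : ConjClasses (QuaternionGroup n)) : ℂ :=
  1 / ((Nat.card (Subgroup.centralizer {Quotient.out c} :
          Subgroup (QuaternionGroup n)) : ℂ) *
        (2 - Matrix.trace (dicRep n (Quotient.out c))))

omit hn in
lemma out_isConj (g : QuaternionGroup n) :
    IsConj g (Quotient.out (ConjClasses.mk g)) :=
  ConjClasses.mk_eq_mk_iff_isConj.mp (Quotient.out_eq _).symm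

include hn

lemma F_mk_a {l : ℕ} (h1 : 1 ≤ l) (h2 : l ≤ n - 1) :
    FF n (ConjClasses.mk (a (l : ZMod (2*n))))
      = 1 / ((2*(n:ℂ)) * (2 - om n ^ l - (om n ^ l)⁻¹)) := by
  haveI : NeZero (2*n) := ⟨by omega⟩
  have hval : ((l : ZMod (2*n))).val = l := ZMod.val_cast_of_lt (by omega)
  have hl0 : (l : ZMod (2*n)) ≠ 0 := by
    intro h
    rw [h, ZMod.val_zero] at hval
    omega
  have h2i : 2 * (l : ZMod (2*n)) ≠ 0 := by
    intro h
    rcases (two_mul_eq_zero_iff hn).mp h with h' | h'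
    · exact hl0 h'
    · have hnv := ZMod.val_cast_of_lt (show n < 2*n by omega)
      rw [← h', hval] at hnv
      omega
  rcases isConj_a_cases (out_isConj (a (l : ZMod (2*n)))) with hg | hg
  · rw [FF, hg, card_cent_a h2i, trace_dicRep_a, hval]
    push_cast
    ring_nf
  · have hneg : (-(l : ZMod (2*n))).val = 2*n - l := by
      rw [ZMod.neg_val, if_neg hl0, hval]
    have h2i' : 2 * (-(l : ZMod (2*n))) ≠ 0 := by
      intro h
      apply h2i
      linear_combination -h
    rw [FF, hg, card_cent_a h2i', trace_dicRep_a, hneg, om_reflect hn (by omega), inv_inv]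
    push_cast
    ring_nf

lemma F_mk_an :
    FF n (ConjClasses.mk (a ((n : ℕ) : ZMod (2*n)))) = 1 / (16*(n:ℂ)) := by
  haveI : NeZero (2*n) := ⟨by omega⟩
  have h2i : 2 * ((n : ℕ) : ZMod (2*n)) = 0 := by
    have := two_n_cast (n := n)
    linear_combination this
  have hvaln : (((n:ℕ) : ZMod (2*n))).val = n := ZMod.val_cast_of_lt (by omega)
  have hcase : Quotient.out (ConjClasses.mk (a ((n : ℕ) : ZMod (2*n))))
      = a ((n : ℕ) : ZMod (2*n)) := by
    rcases isConj_a_cases (out_isConj (a ((n : ℕ) : ZMod (2*n)))) with hg | hg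
    · exact hg
    · rw [hg]
      congr 1
      linear_combination -h2i
  rw [FF, hcase, card_cent_central hn h2i, trace_dicRep_a, hvaln, om_pow_n hn]
  push_cast
  norm_num
  ring

lemma F_mk_xa (i : ZMod (2*n)) :
    FF n (ConjClasses.mk (xa i)) = 1 / 8 := by
  obtain ⟨j, hg⟩ := isConj_xa_cases (out_isConj (xa i))
  rw [FF, hg, card_cent_xa hn, trace_dicRep_xa]
  norm_num

end Eval

end Stmt18Aux

open Stmt18Aux QuaternionGroup Finset

theorem stmt18 (n : ℕ) (hn : 2 ≤ n) :
    ∑ᶠ (c : ConjClasses (QuaternionGroup n)) (_ : c ≠ ConjClasses.mk 1),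
      1 / ((Nat.card (Subgroup.centralizer {Quotient.out c} :
              Subgroup (QuaternionGroup n)) : ℂ) *
            (2 - Matrix.trace (dicRep n (Quotient.out c)))) =
      (1 / 12) * ((n : ℂ) + 3 - 1 / (4 * n)) := by
  classical
  haveI : NeZero n := ⟨by omega⟩
  haveI : NeZero (2*n) := ⟨by omega⟩
  haveI : Fact (1 < 2*n) := ⟨by omega⟩
  set R : Finset (QuaternionGroup n) :=
    ((Finset.Icc 1 n).image fun l : ℕ => a (l : ZMod (2*n))) ∪ {xa 0, xa 1} with hR
  have hmemR : ∀ r : QuaternionGroup n,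
      r ∈ R ↔ ((∃ l, (1 ≤ l ∧ l ≤ n) ∧ r = a (l : ZMod (2*n))) ∨ r = xa 0 ∨ r = xa 1) := by
    intro r
    simp only [hR, Finset.mem_union, Finset.mem_image, Finset.mem_insert,
      Finset.mem_singleton, Finset.mem_Icc]
    constructor
    · rintro (⟨l, hl, rfl⟩ | h | h)
      · exact Or.inl ⟨l, hl, rfl⟩
      · exact Or.inr (Or.inl h)
      · exact Or.inr (Or.inr h)
    · rintro (⟨l, hl, rfl⟩ | h | h)
      · exact Or.inl ⟨l, hl, rfl⟩
      · exact Or.inr (Or.inl h)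
      · exact Or.inr (Or.inr h)
  have stepA : (∑ᶠ (c : ConjClasses (QuaternionGroup n)) (_ : c ≠ ConjClasses.mk 1), FF n c)
      = ∑ c ∈ R.image ConjClasses.mk, FF n c := by
    apply finsum_cond_eq_sum_of_cond_iff
    intro c _
    constructor
    · intro hne
      obtain ⟨g, hg⟩ := ConjClasses.exists_rep c
      rw [Finset.mem_image]
      rcases g with i | i
      · have hi0 : i ≠ 0 := by
          rintro rfl
          exact hne (by rw [← hg]; exact congrArg ConjClasses.mk QuaternionGroup.one_def.symm)
        have hv1 : 1 ≤ i.val := Nat.one_le_iff_ne_zero.mpr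
          (fun h => hi0 (by rw [← ZMod.natCast_zmod_val i, h, Nat.cast_zero]))
        have hv2 : i.val < 2*n := ZMod.val_lt i
        by_cases hc' : i.val ≤ n
        · refine ⟨a ((i.val : ℕ) : ZMod (2*n)), ?_, ?_⟩
          · rw [hmemR]; exact Or.inl ⟨i.val, ⟨hv1, hc'⟩, by rw [ZMod.natCast_zmod_val]⟩
          · rw [ZMod.natCast_zmod_val, hg]
        · refine ⟨a (((2*n - i.val : ℕ)) : ZMod (2*n)), ?_, ?_⟩
          · rw [hmemR]; exact Or.inl ⟨2*n - i.val, ⟨by omega, by omega⟩, rfl⟩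
          · have hcast : ((2*n - i.val : ℕ) : ZMod (2*n)) = -i := by
              rw [Nat.cast_sub (by omega), ZMod.natCast_self, ZMod.natCast_zmod_val, zero_sub]
            rw [hcast, ← hg]
            exact ConjClasses.mk_eq_mk_iff_isConj.mpr (isConj_a_neg i).symm
      · refine ⟨xa ((i.val % 2 : ℕ) : ZMod (2*n)), ?_, ?_⟩
        · rw [hmemR]
          rcases Nat.mod_two_eq_zero_or_one i.val with h | h <;> rw [h]
          · right; left; norm_num
          · right; right; norm_num
        · rw [← hg]
          apply ConjClasses.mk_eq_mk_iff_isConj.mpr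
          have hsplit : i = ((i.val % 2 : ℕ) : ZMod (2*n)) + 2 * ((i.val / 2 : ℕ) : ZMod (2*n)) := by
            have hv : i.val = i.val % 2 + 2*(i.val/2) := by omega
            conv_lhs => rw [← ZMod.natCast_zmod_val i, hv]
            push_cast
            ring
          have := isConj_xa_shift (((i.val % 2 : ℕ)) : ZMod (2*n)) (((i.val / 2 : ℕ)) : ZMod (2*n))
          rwa [← hsplit] at this
    · intro hmem heq
      rw [Finset.mem_image] at hmem
      obtain ⟨r, hrR, rfl⟩ := hmem
      have hr1 : r = 1 := isConj_one_left.mp (ConjClasses.mk_eq_mk_iff_isConj.mp heq)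
      rw [hmemR] at hrR
      rcases hrR with ⟨l, ⟨hl1, hl2⟩, rfl⟩ | rfl | rfl
      · rw [QuaternionGroup.one_def] at hr1
        have h0 : (l : ZMod (2*n)) = 0 := by injection hr1
        have hval := ZMod.val_cast_of_lt (show l < 2*n by omega)
        rw [h0, ZMod.val_zero] at hval
        omega
      · rw [QuaternionGroup.one_def] at hr1
        cases hr1
      · rw [QuaternionGroup.one_def] at hr1
        cases hr1
  have hinj : ∀ x ∈ R, ∀ y ∈ R, ConjClasses.mk x = ConjClasses.mk y → x = y := by
    intro x hx y hy hxy
    have hconj := ConjClasses.mk_eq_mk_iff_isConj.mp hxy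
    have hvcast : ∀ l : ℕ, l ≤ n → ((l : ZMod (2*n))).val = l := fun l hl =>
      ZMod.val_cast_of_lt (by omega)
    rcases (hmemR x).mp hx with ⟨l, ⟨hl1, hl2⟩, rfl⟩ | rfl | rfl <;>
      rcases (hmemR y).mp hy with ⟨l', ⟨m1, m2⟩, rfl⟩ | rfl | rfl
    · rcases isConj_a_cases hconj with h | h
      · have h' : (l' : ZMod (2*n)) = (l : ZMod (2*n)) := by injection h
        have : l' = l := by
          have e1 := hvcast l hl2
          have e2 := hvcast l' m2
          rw [← e1, ← e2, h']
        rw [this]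
      · have h' : (l' : ZMod (2*n)) = -(l : ZMod (2*n)) := by injection h
        have hsum : ((l + l' : ℕ) : ZMod (2*n)) = 0 := by push_cast; linear_combination h'
        have hdvd := (ZMod.natCast_eq_zero_iff _ _).mp hsum
        obtain ⟨c, hc⟩ := hdvd
        have hc1 : c = 1 := by nlinarith
        rw [hc1, mul_one] at hc
        have : l = n ∧ l' = n := by omega
        rw [this.1, this.2]
    · rcases isConj_a_cases hconj with h | h <;> cases h
    · rcases isConj_a_cases hconj with h | h <;> cases h
    · obtain ⟨j, h⟩ := isConj_xa_cases hconj
      cases h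
    · rfl
    · obtain ⟨j, h⟩ := isConj_xa_cases hconj
      exfalso
      have h' : (1 : ZMod (2*n)) = 0 + 2 * j := by injection h
      have h'' : ((2 * j.val : ℕ) : ZMod (2*n)) = 1 := by
        rw [← ZMod.natCast_zmod_val j] at h'
        push_cast at h' ⊢
        linear_combination -h'
      have hval := congrArg ZMod.val h''
      rw [ZMod.val_natCast, ZMod.val_one, Nat.mul_mod_mul_left] at hval
      omega
    · obtain ⟨j, h⟩ := isConj_xa_cases hconj
      cases h
    · obtain ⟨j, h⟩ := isConj_xa_cases hconj
      exfalso
      have h' : (0 : ZMod (2*n)) = 1 + 2 * j := by injection h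
      have h'' : ((2 * j.val + 1 : ℕ) : ZMod (2*n)) = 0 := by
        rw [← ZMod.natCast_zmod_val j] at h'
        push_cast at h' ⊢
        linear_combination -h'
      have hdvd := (ZMod.natCast_eq_zero_iff _ _).mp h''
      obtain ⟨c, hc⟩ := hdvd
      have hc2 : 2 * j.val + 1 = 2 * (n * c) := by rw [hc]; ring
      omega
    · rfl
  have hdisj : Disjoint ((Finset.Icc 1 n).image fun l : ℕ => a (l : ZMod (2*n)))
      ({xa 0, xa 1} : Finset (QuaternionGroup n)) := by
    rw [Finset.disjoint_left]
    rintro x hx hx'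
    rw [Finset.mem_image] at hx
    obtain ⟨l, _, rfl⟩ := hx
    rcases Finset.mem_insert.mp hx' with h | h
    · cases h
    · rw [Finset.mem_singleton] at h
      cases h
  have hxane : (xa 0 : QuaternionGroup n) ≠ xa 1 := by
    intro h
    have h' : (0 : ZMod (2*n)) = 1 := by injection h
    have := congrArg ZMod.val h'
    rw [ZMod.val_zero, ZMod.val_one] at this
    omega
  have hainj : ∀ x ∈ Finset.Icc 1 n, ∀ y ∈ Finset.Icc 1 n,
      a (x : ZMod (2*n)) = a (y : ZMod (2*n)) → x = y := by
    intro x hx y hy h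
    rw [Finset.mem_Icc] at hx hy
    have h' : (x : ZMod (2*n)) = (y : ZMod (2*n)) := by injection h
    have e1 := ZMod.val_cast_of_lt (show x < 2*n by omega)
    have e2 := ZMod.val_cast_of_lt (show y < 2*n by omega)
    rw [← e1, ← e2, h']
  -- assemble
  show (∑ᶠ (c : ConjClasses (QuaternionGroup n)) (_ : c ≠ ConjClasses.mk 1), FF n c) = _
  rw [stepA, Finset.sum_image hinj, hR, Finset.sum_union hdisj,
    Finset.sum_image hainj, Finset.sum_pair hxane]
  have hIcc : Finset.Icc 1 n = Finset.Ioc 0 n := by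
    ext x
    simp only [Finset.mem_Icc, Finset.mem_Ioc]
    omega
  have htop : ∑ l ∈ Finset.Ioc 0 n, FF n (ConjClasses.mk (a (l : ZMod (2*n))))
      = ∑ l ∈ Finset.Ioc 0 (n-1), FF n (ConjClasses.mk (a (l : ZMod (2*n))))
        + FF n (ConjClasses.mk (a ((n:ℕ) : ZMod (2*n)))) := by
    have := Finset.sum_Ioc_succ_top (by omega : 0 ≤ n - 1)
      (fun l => FF n (ConjClasses.mk (a (l : ZMod (2*n)))))
    rw [show n - 1 + 1 = n from by omega] at this
    exact this
  rw [hIcc, htop, F_mk_an hn, F_mk_xa hn, F_mk_xa hn]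
  have hterm : ∀ l ∈ Finset.Ioc 0 (n-1),
      FF n (ConjClasses.mk (a (l : ZMod (2*n))))
        = (2*(n:ℂ))⁻¹ * (1 / ((1 - om n ^ l) * (1 - (om n ^ l)⁻¹))) := by
    intro l hl
    rw [Finset.mem_Ioc] at hl
    rw [F_mk_a hn hl.1 hl.2]
    have hz0 : om n ^ l ≠ 0 := pow_ne_zero _ (om_ne_zero n)
    have hzz : (1 - om n ^ l) * (1 - (om n ^ l)⁻¹) = 2 - om n ^ l - (om n ^ l)⁻¹ := by
      field_simp
      ring
    rw [hzz, one_div, one_div, mul_inv]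
  rw [Finset.sum_congr rfl hterm, ← Finset.mul_sum, Ssum hn]
  have hn0 : (n:ℂ) ≠ 0 := nC_ne_zero hn
  have hid : (n:ℂ) * ((n:ℂ))⁻¹ = 1 := mul_inv_cancel₀ hn0
  linear_combination ((n:ℂ)/12) * hid
end
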